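/- Let f(s) = log(1 + exp(s)) and for w₁, w₂, c ∈ ℝ define K₁₂ = f(w₁+w₂+c) − f(w₁+c) − f(w₂+c) + f(c). Then K₁₂ ≥ 0 if and only if w₁·w₂ ≥ 0, and K₁₂ ≤ 0 if and only if w₁·w₂ ≤ 0. -/
import Mathlib

open Real

lemma sign_factor (a b : ℝ) :
    (0 ≤ (Real.exp a - 1) * (Real.exp b - 1) ↔ 0 ≤ a * b) ∧
    ((Real.exp a - 1) * (Real.exp b - 1) ≤ 0 ↔ a * b ≤ 0) := by
  constructor
  · rw [mul_nonneg_iff, mul_nonneg_iff, sub_nonneg, sub_nonneg, sub_nonpos, sub_nonpos,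
      Real.one_le_exp_iff, Real.one_le_exp_iff, Real.exp_le_one_iff, Real.exp_le_one_iff]
  · rw [mul_nonpos_iff, mul_nonpos_iff, sub_nonneg, sub_nonneg, sub_nonpos, sub_nonpos,
      Real.one_le_exp_iff, Real.one_le_exp_iff, Real.exp_le_one_iff, Real.exp_le_one_iff]

theorem quadratic_coeff_sign_iff (w₁ w₂ c : ℝ) :
    (0 ≤ Real.log (1 + Real.exp (w₁ + w₂ + c)) - Real.log (1 + Real.exp (w₁ + c))
        - Real.log (1 + Real.exp (w₂ + c)) + Real.log (1 + Real.exp c) ↔ 0 ≤ w₁ * w₂) ∧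
    (Real.log (1 + Real.exp (w₁ + w₂ + c)) - Real.log (1 + Real.exp (w₁ + c))
        - Real.log (1 + Real.exp (w₂ + c)) + Real.log (1 + Real.exp c) ≤ 0 ↔ w₁ * w₂ ≤ 0) := by
  have hA : (0:ℝ) < 1 + Real.exp (w₁ + w₂ + c) := by positivity
  have hB : (0:ℝ) < 1 + Real.exp (w₁ + c) := by positivity
  have hC : (0:ℝ) < 1 + Real.exp (w₂ + c) := by positivity
  have hD : (0:ℝ) < 1 + Real.exp c := by positivity
  have key : Real.log (1 + Real.exp (w₁ + w₂ + c)) - Real.log (1 + Real.exp (w₁ + c))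
      - Real.log (1 + Real.exp (w₂ + c)) + Real.log (1 + Real.exp c)
      = Real.log ((1 + Real.exp (w₁ + w₂ + c)) * (1 + Real.exp c))
        - Real.log ((1 + Real.exp (w₁ + c)) * (1 + Real.exp (w₂ + c))) := by
    rw [Real.log_mul (ne_of_gt hA) (ne_of_gt hD), Real.log_mul (ne_of_gt hB) (ne_of_gt hC)]
    ring
  have hdiff : (1 + Real.exp (w₁ + w₂ + c)) * (1 + Real.exp c)
      - (1 + Real.exp (w₁ + c)) * (1 + Real.exp (w₂ + c))
      = Real.exp c * ((Real.exp w₁ - 1) * (Real.exp w₂ - 1)) := by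
    simp only [Real.exp_add]; ring
  have hec : (0:ℝ) < Real.exp c := Real.exp_pos c
  constructor
  · rw [key, sub_nonneg, Real.log_le_log_iff (by positivity) (by positivity), ← sub_nonneg,
      hdiff, mul_nonneg_iff_of_pos_left hec, (sign_factor w₁ w₂).1]
  · rw [key, sub_nonpos, Real.log_le_log_iff (by positivity) (by positivity), ← sub_nonpos,
      hdiff]
    rw [show (Real.exp c * ((Real.exp w₁ - 1) * (Real.exp w₂ - 1)) ≤ 0) ↔
        ((Real.exp w₁ - 1) * (Real.exp w₂ - 1) ≤ 0) by
      constructor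
      · intro h; nlinarith
      · intro h; nlinarith]
    exact (sign_factor w₁ w₂).2
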